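/- Let μ be a compact-finite deficient topological measure on a locally compact Hausdorff space X and g, h ∈ C₀⁺(X) with g·h = 0 (pointwise). Then for every compact set K, ∫_K (g+h) dμ = ∫_K g dμ + ∫_K h dμ; that is, ∫₀^∞ μ(K ∩ (g+h)⁻¹([t,∞))) dt = ∫₀^∞ μ(K ∩ g⁻¹([t,∞))) dt + ∫₀^∞ μ(K ∩ h⁻¹([t,∞))) dt. -/

import Mathlib

open MeasureTheory Set Filter Topology ENNReal

/-- A deficient topological measure on a topological space `X`: a set function with values in
`[0,∞]` (recorded on all sets, but constrained only on open and closed sets) that is finitely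
additive on disjoint compact sets, inner regular on open sets with respect to compact sets,
and outer regular on closed sets with respect to open sets. -/
structure DeficientTopologicalMeasure (X : Type*) [TopologicalSpace X] where
  m : Set X → ℝ≥0∞
  additive : ∀ ⦃C K : Set X⦄, IsCompact C → IsCompact K → Disjoint C K →
    m (C ∪ K) = m C + m K
  innerRegular : ∀ ⦃U : Set X⦄, IsOpen U →
    m U = ⨆ (K : Set X) (_ : IsCompact K) (_ : K ⊆ U), m K
  outerRegular : ∀ ⦃F : Set X⦄, IsClosed F →
    m F = ⨅ (U : Set X) (_ : IsOpen U) (_ : F ⊆ U), m U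

/-- Monotonicity of a DTM on compact sets. -/
lemma DTM.mono_compact {X : Type*} [TopologicalSpace X] [T2Space X]
    (μ : DeficientTopologicalMeasure X) {C K : Set X}
    (hC : IsCompact C) (hK : IsCompact K) (hCK : C ⊆ K) : μ.m C ≤ μ.m K := by
  rw [μ.outerRegular hK.isClosed]
  refine le_iInf fun U => le_iInf fun hU => le_iInf fun hKU => ?_
  rw [μ.innerRegular hU]
  exact le_iSup_of_le C (le_iSup_of_le hC (le_iSup_of_le (hCK.trans hKU) le_rfl))

/-- Let `μ` be a compact-finite deficient topological measure on a locally
compact Hausdorff space and `g, h ∈ C₀⁺(X)` with `g·h = 0`. Then for every compact `K`,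
`∫_K (g+h) dμ = ∫_K g dμ + ∫_K h dμ` for the quasi-integrals
`∫_K g dμ = ∫₀^∞ μ(K ∩ g⁻¹([t,∞))) dt`. -/
theorem stmt6 {X : Type*} [TopologicalSpace X] [LocallyCompactSpace X] [T2Space X]
    (μ : DeficientTopologicalMeasure X)
    (hcf : ∀ K : Set X, IsCompact K → μ.m K < ∞)
    (g h : X → ℝ) (hg : Continuous g) (hh : Continuous h)
    (hg0 : ∀ x, 0 ≤ g x) (hh0 : ∀ x, 0 ≤ h x)
    (hginf : Tendsto g (cocompact X) (nhds 0)) (hhinf : Tendsto h (cocompact X) (nhds 0))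
    (hgh : ∀ x, g x * h x = 0)
    (K : Set X) (hK : IsCompact K) :
    ∫⁻ t in Ioi (0 : ℝ), μ.m (K ∩ (fun x => g x + h x) ⁻¹' (Ici t)) =
      (∫⁻ t in Ioi (0 : ℝ), μ.m (K ∩ g ⁻¹' (Ici t))) +
        ∫⁻ t in Ioi (0 : ℝ), μ.m (K ∩ h ⁻¹' (Ici t)) := by
  have hKg : ∀ t : ℝ, IsCompact (K ∩ g ⁻¹' (Ici t)) :=
    fun t => hK.inter_right (isClosed_Ici.preimage hg)
  have hKh : ∀ t : ℝ, IsCompact (K ∩ h ⁻¹' (Ici t)) :=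
    fun t => hK.inter_right (isClosed_Ici.preimage hh)
  have key : ∀ t : ℝ, 0 < t →
      μ.m (K ∩ (fun x => g x + h x) ⁻¹' (Ici t)) =
        μ.m (K ∩ g ⁻¹' (Ici t)) + μ.m (K ∩ h ⁻¹' (Ici t)) := by
    intro t ht
    have hset : K ∩ (fun x => g x + h x) ⁻¹' (Ici t) =
        (K ∩ g ⁻¹' (Ici t)) ∪ (K ∩ h ⁻¹' (Ici t)) := by
      ext x
      simp only [mem_inter_iff, mem_preimage, mem_Ici, mem_union]
      constructor
      · rintro ⟨hxK, hsum⟩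
        rcases mul_eq_zero.mp (hgh x) with h0 | h0
        · exact Or.inr ⟨hxK, by linarith⟩
        · exact Or.inl ⟨hxK, by linarith⟩
      · rintro (⟨hxK, hge⟩ | ⟨hxK, hge⟩)
        · exact ⟨hxK, by have := hh0 x; linarith⟩
        · exact ⟨hxK, by have := hg0 x; linarith⟩
    have hdisj : Disjoint (K ∩ g ⁻¹' (Ici t)) (K ∩ h ⁻¹' (Ici t)) := by
      rw [Set.disjoint_left]
      rintro x ⟨-, hgx⟩ ⟨-, hhx⟩
      simp only [mem_preimage, mem_Ici] at hgx hhx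
      have : g x * h x > 0 := mul_pos (lt_of_lt_of_le ht hgx) (lt_of_lt_of_le ht hhx)
      rw [hgh x] at this; exact lt_irrefl 0 this
    rw [hset, μ.additive (hKg t) (hKh t) hdisj]
  have hanti : ∀ (f : X → ℝ), Continuous f →
      Antitone (fun t : ℝ => μ.m (K ∩ f ⁻¹' (Ici t))) := by
    intro f hf s t hst
    exact DTM.mono_compact μ (hK.inter_right (isClosed_Ici.preimage hf))
      (hK.inter_right (isClosed_Ici.preimage hf))
      (inter_subset_inter_right K (preimage_mono (Ici_subset_Ici.mpr hst)))
  have hmg : Measurable (fun t : ℝ => μ.m (K ∩ g ⁻¹' (Ici t))) := (hanti g hg).measurable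
  have hmh : Measurable (fun t : ℝ => μ.m (K ∩ h ⁻¹' (Ici t))) := (hanti h hh).measurable
  rw [setLIntegral_congr_fun measurableSet_Ioi
    (fun t ht => key t ht),
    lintegral_add_left hmg]
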